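/- Suppose f ∈ Q[x_1,...,x_n] is homogeneous of degree k and f = g·h where g is a symmetric polynomial homogeneous of degree strictly greater than k + 1 − n. Then the divided symmetrization ⟨f⟩_n equals 0. -/

import Mathlib

open MvPolynomial

/-- The denominator `∏_{i=1}^{n-1} (x_i - x_{i+1})` of divided symmetrization. -/
noncomputable def denomDS (n : ℕ) : MvPolynomial (Fin n) ℚ :=
  ∏ i : Fin (n - 1),
    (X (⟨i.1, by have := i.isLt; omega⟩ : Fin n) - X ⟨i.1 + 1, by have := i.isLt; omega⟩)

/-- Divided symmetrization `⟨f⟩_n = Σ_{w ∈ S_n} w·(f / ∏ (x_i - x_{i+1}))`, as an element of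
the fraction field of `ℚ[x_1,...,x_n]`. -/
noncomputable def DS (n : ℕ) (f : MvPolynomial (Fin n) ℚ) :
    FractionRing (MvPolynomial (Fin n) ℚ) :=
  ∑ w : Equiv.Perm (Fin n),
    algebraMap (MvPolynomial (Fin n) ℚ) _ (rename w f) /
      algebraMap (MvPolynomial (Fin n) ℚ) _ (rename w (denomDS n))

namespace DSAux

open Finset

variable {n : ℕ}

/-- The Vandermonde polynomial. -/
noncomputable def Vn (n : ℕ) : MvPolynomial (Fin n) ℚ :=
  ∏ i : Fin n, ∏ j ∈ Finset.Ioi i, (X j - X i)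

/-- The set of increasing pairs. -/
def Pn (n : ℕ) : Finset (Fin n × Fin n) := Finset.univ.filter fun p => p.1 < p.2

lemma X_sub_X_ne_zero {a b : Fin n} (hab : a ≠ b) :
    (X b - X a : MvPolynomial (Fin n) ℚ) ≠ 0 :=
  sub_ne_zero.mpr fun e => hab (X_injective e).symm

lemma Vn_eq_det : Vn n = Matrix.det (Matrix.vandermonde X) := (Matrix.det_vandermonde X).symm

lemma Vn_eq_prod : Vn n = ∏ p ∈ Pn n, (X p.2 - X p.1) := by
  rw [Vn, Finset.prod_sigma']
  refine Finset.prod_nbij (fun x => (x.1, x.2)) ?_ ?_ ?_ ?_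
  · rintro ⟨i, j⟩ hij
    simp only [Finset.mem_sigma, Finset.mem_univ, Finset.mem_Ioi, true_and] at hij
    simp [Pn, hij]
  · rintro ⟨i, j⟩ - ⟨i', j'⟩ - e
    simpa [Sigma.ext_iff, Prod.ext_iff] using e
  · rintro ⟨i, j⟩ hij
    simp only [Pn, Finset.coe_filter, Set.mem_setOf_eq, Finset.mem_univ, true_and] at hij
    exact ⟨⟨i, j⟩, by simp [hij], rfl⟩
  · intros; rfl

lemma Vn_ne_zero : Vn n ≠ 0 := by
  rw [Vn_eq_prod]
  rw [Finset.prod_ne_zero_iff]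
  intro p hp
  simp only [Pn, Finset.mem_filter, Finset.mem_univ, true_and] at hp
  exact X_sub_X_ne_zero hp.ne

lemma Vn_homog : (Vn n).IsHomogeneous (Pn n).card := by
  rw [Vn_eq_prod, Finset.card_eq_sum_ones]
  exact IsHomogeneous.prod _ _ _ fun p _ => (isHomogeneous_X _ _).sub (isHomogeneous_X _ _)

lemma rename_swap_Vn {a b : Fin n} (hab : a ≠ b) :
    rename (⇑(Equiv.swap a b)) (Vn n) = - Vn n := by
  have h1 : rename (⇑(Equiv.swap a b)) (Vn n)
      = Matrix.det (Matrix.vandermonde (fun i => (X (Equiv.swap a b i) : MvPolynomial (Fin n) ℚ))) := by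
    rw [Matrix.det_vandermonde, Vn]
    simp [map_prod]
  have h2 : Matrix.vandermonde (fun i => (X (Equiv.swap a b i) : MvPolynomial (Fin n) ℚ))
      = (Matrix.vandermonde X).submatrix (Equiv.swap a b) id := rfl
  rw [h1, h2, Matrix.det_permute, Equiv.Perm.sign_swap hab, ← Vn_eq_det]
  simp

/-- `lo i` is `i` seen in `Fin n`. -/
def lo (i : Fin (n - 1)) : Fin n := ⟨i.1, by have := i.isLt; omega⟩

/-- `hi i` is `i+1` seen in `Fin n`. -/
def hi (i : Fin (n - 1)) : Fin n := ⟨i.1 + 1, by have := i.isLt; omega⟩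

lemma denom_eq : denomDS n = ∏ i : Fin (n - 1), (X (lo i) - X (hi i)) := rfl

lemma lo_ne_hi (i : Fin (n - 1)) : lo i ≠ hi i := by
  simp [lo, hi, Fin.ext_iff]

lemma denom_ne_zero : denomDS n ≠ 0 := by
  rw [denom_eq, Finset.prod_ne_zero_iff]
  exact fun i _ => X_sub_X_ne_zero (lo_ne_hi i).symm

lemma denom_homog : (denomDS n).IsHomogeneous (n - 1) := by
  rw [denom_eq]
  have := IsHomogeneous.prod (Finset.univ : Finset (Fin (n - 1)))
    (fun i => (X (lo i) - X (hi i) : MvPolynomial (Fin n) ℚ)) (fun _ => 1)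
    (fun i _ => (isHomogeneous_X _ _).sub (isHomogeneous_X _ _))
  simpa using this

lemma rename_denom_ne_zero (w : Equiv.Perm (Fin n)) : rename (⇑w) (denomDS n) ≠ 0 := by
  intro hz
  exact denom_ne_zero (rename_injective _ w.injective (by simpa using hz))

lemma rename_denom_dvd (w : Equiv.Perm (Fin n)) : rename (⇑w) (denomDS n) ∣ Vn n := by
  classical
  set ι : Fin (n - 1) → Fin n × Fin n := fun i =>
    if w (lo i) < w (hi i) then (w (lo i), w (hi i)) else (w (hi i), w (lo i)) with hι
  have hwne : ∀ i : Fin (n - 1), w (lo i) ≠ w (hi i) := fun i h =>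
    lo_ne_hi i (w.injective h)
  have hfac : ∀ i : Fin (n - 1),
      (X (w (lo i)) - X (w (hi i)) : MvPolynomial (Fin n) ℚ)
        = (if w (lo i) < w (hi i) then (-1 : MvPolynomial (Fin n) ℚ) else 1)
          * (X (ι i).2 - X (ι i).1) := by
    intro i
    rw [hι]
    by_cases hlt : w (lo i) < w (hi i) <;> simp [hlt]
  have hren : rename (⇑w) (denomDS n)
      = (∏ i : Fin (n - 1), if w (lo i) < w (hi i) then (-1 : MvPolynomial (Fin n) ℚ) else 1)
        * ∏ i : Fin (n - 1), (X (ι i).2 - X (ι i).1) := by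
    rw [denom_eq, map_prod, ← Finset.prod_mul_distrib]
    refine Finset.prod_congr rfl fun i _ => ?_
    rw [map_sub, rename_X, rename_X]
    exact hfac i
  have hinj : Function.Injective ι := by
    intro i j hij
    have : ({w (lo i), w (hi i)} : Set (Fin n)) = {w (lo j), w (hi j)} := by
      rw [hι] at hij
      by_cases h1 : w (lo i) < w (hi i) <;> by_cases h2 : w (lo j) < w (hi j) <;>
        simp only [h1, h2, if_true, if_false, Prod.mk.injEq] at hij <;>
        rw [hij.1, hij.2] <;> simp [Set.pair_comm]
    have hcases : (w (lo i) = w (lo j) ∧ w (hi i) = w (hi j))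
        ∨ (w (lo i) = w (hi j) ∧ w (hi i) = w (lo j)) := by
      have h1 : w (lo i) ∈ ({w (lo j), w (hi j)} : Set (Fin n)) := by
        rw [← this]; left; rfl
      have h2 : w (hi i) ∈ ({w (lo j), w (hi j)} : Set (Fin n)) := by
        rw [← this]; right; rfl
      rcases h1 with h1 | h1 <;> rcases h2 with h2 | h2
      · exact absurd (h1.trans h2.symm) (hwne i)
      · exact Or.inl ⟨h1, h2⟩
      · exact Or.inr ⟨h1, h2⟩
      · exact absurd (h1.trans h2.symm) (hwne i)
    rcases hcases with ⟨h1, h2⟩ | ⟨h1, h2⟩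
    · have e : lo i = lo j := w.injective h1
      have : i.1 = j.1 := by simpa [lo, Fin.ext_iff] using e
      exact Fin.ext this
    · have e1 : (lo i).1 = (hi j).1 := congrArg Fin.val (w.injective h1)
      have e2 : (hi i).1 = (lo j).1 := congrArg Fin.val (w.injective h2)
      simp only [lo, hi] at e1 e2
      exact Fin.ext (by omega)
  have himg : ∀ i : Fin (n - 1), ι i ∈ Pn n := by
    intro i
    rw [hι]
    by_cases hlt : w (lo i) < w (hi i)
    · simp [Pn, hlt]
    · have : w (hi i) < w (lo i) := lt_of_le_of_ne (not_lt.mp hlt) (hwne i).symm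
      simp [Pn, hlt, this]
  have hdvd : (∏ i : Fin (n - 1), (X (ι i).2 - X (ι i).1 : MvPolynomial (Fin n) ℚ)) ∣ Vn n := by
    have himage : ∏ p ∈ Finset.univ.image ι, (X p.2 - X p.1 : MvPolynomial (Fin n) ℚ)
        = ∏ i : Fin (n - 1), (X (ι i).2 - X (ι i).1) :=
      Finset.prod_image (fun i _ j _ h => hinj h)
    rw [Vn_eq_prod, ← himage]
    refine Finset.prod_dvd_prod_of_subset _ _ _ ?_
    intro p hp
    simp only [Finset.mem_image] at hp
    obtain ⟨i, -, rfl⟩ := hp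
    exact himg i
  have hunit : IsUnit (∏ i : Fin (n - 1),
      if w (lo i) < w (hi i) then (-1 : MvPolynomial (Fin n) ℚ) else 1) := by
    refine IsUnit.of_mul_eq_one (∏ i : Fin (n - 1),
      if w (lo i) < w (hi i) then (-1 : MvPolynomial (Fin n) ℚ) else 1) ?_
    rw [← Finset.prod_mul_distrib]
    refine Finset.prod_eq_one fun i _ => ?_
    by_cases hlt : w (lo i) < w (hi i) <;> simp [hlt]
  rw [hren]
  exact (hunit.mul_left_dvd).mpr hdvd

lemma prime_X_sub_X {a b : Fin n} (hab : a ≠ b) :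
    Prime (X a - X b : MvPolynomial (Fin n) ℚ) := by
  cases n with
  | zero => exact a.elim0
  | succ m =>
    set τ := Equiv.swap a 0 with hτ
    have hb : τ b ≠ 0 := by
      intro hz
      exact hab (by
        have : τ b = τ a := by rw [hz, Equiv.swap_apply_left]
        exact (τ.injective this).symm)
    obtain ⟨c, hc⟩ := Fin.exists_succ_eq_of_ne_zero hb
    have step1 : Prime (X a - X b : MvPolynomial (Fin (m + 1)) ℚ)
        ↔ Prime (rename (⇑τ) (X a - X b) : MvPolynomial (Fin (m + 1)) ℚ) :=
      (MulEquiv.prime_iff (MvPolynomial.renameEquiv ℚ τ).toMulEquiv).symm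
    rw [step1]
    have e1 : (rename (⇑τ) (X a - X b) : MvPolynomial (Fin (m + 1)) ℚ)
        = X 0 - X (Fin.succ c) := by
      rw [map_sub, rename_X, rename_X, Equiv.swap_apply_left, hc]
    rw [e1]
    have step2 : Prime (X 0 - X (Fin.succ c) : MvPolynomial (Fin (m + 1)) ℚ)
        ↔ Prime ((finSuccEquiv ℚ m) (X 0 - X (Fin.succ c))) :=
      (MulEquiv.prime_iff (finSuccEquiv ℚ m).toMulEquiv).symm
    rw [step2, map_sub, finSuccEquiv_X_zero, finSuccEquiv_X_succ]
    exact Polynomial.prime_X_sub_C _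

lemma sub_dvd_aeval_self (a b : Fin n) (p : MvPolynomial (Fin n) ℚ) :
    (X a - X b : MvPolynomial (Fin n) ℚ)
      ∣ p - aeval (R := ℚ) (fun i => if i = a then X b else X i) p := by
  classical
  induction p using MvPolynomial.induction_on with
  | C c => simp
  | add p q hp hq =>
    have : p + q - aeval (R := ℚ) (fun i => if i = a then X b else X i) (p + q)
        = (p - aeval (R := ℚ) (fun i => if i = a then X b else X i) p)
          + (q - aeval (R := ℚ) (fun i => if i = a then X b else X i) q) := by
      rw [map_add]; ring
    rw [this]
    exact dvd_add hp hq
  | mul_X p i hp =>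
    have : p * X i - aeval (R := ℚ) (fun i => if i = a then X b else X i) (p * X i)
        = (p - aeval (R := ℚ) (fun i => if i = a then X b else X i) p) * X i
          + aeval (R := ℚ) (fun i => if i = a then X b else X i) p
            * (X i - aeval (R := ℚ) (fun i => if i = a then X b else X i) (X i)) := by
      rw [map_mul]; ring
    rw [this]
    refine dvd_add (hp.mul_right _) (Dvd.dvd.mul_left ?_ _)
    rw [aeval_X]
    by_cases hia : i = a
    · subst hia; simp
    · simp [hia]

lemma not_dvd_X_sub_X {p q : Fin n × Fin n} (hp : p.1 < p.2) (hq : q.1 < q.2) (hpq : p ≠ q) :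
    ¬ ((X q.2 - X q.1 : MvPolynomial (Fin n) ℚ) ∣ (X p.2 - X p.1)) := by
  classical
  intro hdvd
  have hp' : p.1.1 < p.2.1 := hp
  have hq' : q.1.1 < q.2.1 := hq
  set e : Fin n → ℚ := fun x => ((if x.1 = q.2.1 then q.1.1 else x.1 : ℕ) : ℚ) with he
  have hq0 : eval e (X q.2 - X q.1 : MvPolynomial (Fin n) ℚ) = 0 := by
    have hq1 : q.1.1 ≠ q.2.1 := hq'.ne
    simp [he, hq1]
  have hzero : eval e (X p.2 - X p.1 : MvPolynomial (Fin n) ℚ) = 0 := by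
    obtain ⟨c, hc⟩ := hdvd
    rw [hc, map_mul, hq0, zero_mul]
  rw [map_sub, eval_X, eval_X, sub_eq_zero] at hzero
  simp only [he] at hzero
  have hv : (if p.2.1 = q.2.1 then q.1.1 else p.2.1) = (if p.1.1 = q.2.1 then q.1.1 else p.1.1) :=
    Nat.cast_injective hzero
  have hne : ¬ (p.1.1 = q.1.1 ∧ p.2.1 = q.2.1) := by
    rintro ⟨h1, h2⟩
    exact hpq (Prod.ext (Fin.ext h1) (Fin.ext h2))
  split_ifs at hv <;> omega

lemma prod_dvd_of_dvd {s : Finset (Fin n × Fin n)} (hs : s ⊆ Pn n)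
    {N : MvPolynomial (Fin n) ℚ} (hdvd : ∀ p ∈ s, (X p.2 - X p.1 : MvPolynomial (Fin n) ℚ) ∣ N) :
    (∏ p ∈ s, (X p.2 - X p.1 : MvPolynomial (Fin n) ℚ)) ∣ N := by
  classical
  induction s using Finset.cons_induction generalizing N with
  | empty => simp
  | cons a s ha ih =>
    have hlt : ∀ r ∈ Finset.cons a s ha, r.1 < r.2 := by
      intro r hr
      have := hs hr
      simp only [Pn, Finset.mem_filter] at this
      exact this.2
    obtain ⟨M, hM⟩ := hdvd a (Finset.mem_cons_self a s)
    have hdvdM : ∀ q ∈ s, (X q.2 - X q.1 : MvPolynomial (Fin n) ℚ) ∣ M := by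
      intro q hq
      have hqd : (X q.2 - X q.1 : MvPolynomial (Fin n) ℚ) ∣ (X a.2 - X a.1) * M := by
        rw [← hM]; exact hdvd q (Finset.mem_cons_of_mem hq)
      have hprime : Prime (X q.2 - X q.1 : MvPolynomial (Fin n) ℚ) :=
        prime_X_sub_X (hlt q (Finset.mem_cons_of_mem hq)).ne'
      rcases hprime.dvd_or_dvd hqd with hcase | hcase
      · exact absurd hcase (not_dvd_X_sub_X (hlt a (Finset.mem_cons_self a s))
          (hlt q (Finset.mem_cons_of_mem hq)) (by rintro rfl; exact ha hq))
      · exact hcase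
    have hsub : s ⊆ Pn n := fun r hr => hs (Finset.mem_cons_of_mem hr)
    have := ih hsub hdvdM
    rw [Finset.prod_cons, hM]
    exact mul_dvd_mul_left _ this

lemma comp_vanish {g h : MvPolynomial (Fin n) ℚ} {d k : ℕ} (hg : g ≠ 0)
    (hgd : g.IsHomogeneous d) (hk : (g * h).IsHomogeneous k)
    {j : ℕ} (hj : d + j ≠ k) : homogeneousComponent j h = 0 := by
  rcases lt_or_ge h.totalDegree j with hj' | hj'
  · exact homogeneousComponent_eq_zero _ _ hj'
  have hmem : j ∈ Finset.range (h.totalDegree + 1) := Finset.mem_range.mpr (by omega)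
  have e1 : homogeneousComponent (d + j) (g * h) = 0 := by
    rw [homogeneousComponent_of_mem ((mem_homogeneousSubmodule _ _).mpr hk),
      if_neg (by omega)]
  have e2 : homogeneousComponent (d + j) (g * h) = g * homogeneousComponent j h := by
    conv_lhs => rw [show h = ∑ i ∈ Finset.range (h.totalDegree + 1), homogeneousComponent i h
      from (sum_homogeneousComponent h).symm]
    rw [Finset.mul_sum, map_sum, Finset.sum_eq_single j]
    · rw [homogeneousComponent_of_mem ((mem_homogeneousSubmodule _ _).mpr
        (hgd.mul (homogeneousComponent_isHomogeneous j h))), if_pos rfl]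
    · intro i _ hi
      rw [homogeneousComponent_of_mem ((mem_homogeneousSubmodule _ _).mpr
        (hgd.mul (homogeneousComponent_isHomogeneous i h))), if_neg (by omega)]
    · intro hcon
      exact absurd hmem hcon
  rw [e2] at e1
  rcases mul_eq_zero.mp e1 with hc | hc
  · exact absurd hc hg
  · exact hc

lemma homog_factor {g h : MvPolynomial (Fin n) ℚ} {d k : ℕ} (hg : g ≠ 0)
    (hgd : g.IsHomogeneous d) (hk : (g * h).IsHomogeneous k) (hdk : d ≤ k) :
    h.IsHomogeneous (k - d) := by
  have : h = homogeneousComponent (k - d) h := by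
    conv_lhs => rw [← sum_homogeneousComponent h]
    rcases lt_or_ge h.totalDegree (k - d) with hc | hc
    · rw [Finset.sum_eq_zero, homogeneousComponent_eq_zero _ _ hc]
      intro i hi
      refine comp_vanish hg hgd hk ?_
      have := Finset.mem_range.mp hi
      omega
    · rw [Finset.sum_eq_single (k - d)]
      · intro i _ hi
        exact comp_vanish hg hgd hk (by omega)
      · intro hcon
        exact absurd (Finset.mem_range.mpr (by omega)) hcon
  rw [this]
  exact homogeneousComponent_isHomogeneous _ _

lemma zero_factor {g h : MvPolynomial (Fin n) ℚ} {d k : ℕ} (hg : g ≠ 0)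
    (hgd : g.IsHomogeneous d) (hk : (g * h).IsHomogeneous k) (hdk : k < d) :
    h = 0 := by
  rw [← sum_homogeneousComponent h]
  exact Finset.sum_eq_zero fun i _ => comp_vanish hg hgd hk (by omega)

lemma DS_zero : DS n 0 = 0 := by
  simp [DS]

lemma key {m : ℕ} (h : MvPolynomial (Fin n) ℚ) (hh : h.IsHomogeneous m) (hm : m + 1 < n) :
    DS n h = 0 := by
  classical
  have halg0 : ∀ p : MvPolynomial (Fin n) ℚ,
      algebraMap (MvPolynomial (Fin n) ℚ) (FractionRing (MvPolynomial (Fin n) ℚ)) p = 0 ↔ p = 0 :=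
    fun p => IsFractionRing.to_map_eq_zero_iff
  have hinj : Function.Injective
      (algebraMap (MvPolynomial (Fin n) ℚ) (FractionRing (MvPolynomial (Fin n) ℚ))) :=
    IsFractionRing.injective _ _
  choose Q hQ using fun w : Equiv.Perm (Fin n) => rename_denom_dvd (n := n) w
  set N : MvPolynomial (Fin n) ℚ := ∑ w : Equiv.Perm (Fin n), rename (⇑w) h * Q w with hN
  have hQne : ∀ w : Equiv.Perm (Fin n), Q w ≠ 0 := by
    intro w hz
    exact Vn_ne_zero (n := n) (by rw [hQ w, hz, mul_zero])
  have frac : ∀ τ : Equiv.Perm (Fin n),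
      algebraMap (MvPolynomial (Fin n) ℚ) (FractionRing (MvPolynomial (Fin n) ℚ))
          (rename (⇑τ) N) /
        algebraMap (MvPolynomial (Fin n) ℚ) (FractionRing (MvPolynomial (Fin n) ℚ))
          (rename (⇑τ) (Vn n)) = DS n h := by
    intro τ
    have hNτ : rename (⇑τ) N = ∑ w : Equiv.Perm (Fin n),
        rename (⇑(τ * w)) h * rename (⇑τ) (Q w) := by
      rw [hN, map_sum]
      refine Finset.sum_congr rfl fun w _ => ?_
      rw [map_mul, rename_rename, ← Equiv.Perm.coe_mul]
    rw [hNτ, map_sum, Finset.sum_div, DS,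
      ← Equiv.sum_comp (Equiv.mulLeft τ) (fun w : Equiv.Perm (Fin n) =>
        algebraMap (MvPolynomial (Fin n) ℚ) (FractionRing (MvPolynomial (Fin n) ℚ))
            (rename (⇑w) h) /
          algebraMap (MvPolynomial (Fin n) ℚ) (FractionRing (MvPolynomial (Fin n) ℚ))
            (rename (⇑w) (denomDS n)))]
    refine Finset.sum_congr rfl fun w _ => ?_
    simp only [Equiv.coe_mulLeft]
    have hVτ : rename (⇑τ) (Vn n) = rename (⇑(τ * w)) (denomDS n) * rename (⇑τ) (Q w) := by
      have := congrArg (rename (⇑τ)) (hQ w)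
      rw [map_mul, rename_rename, ← Equiv.Perm.coe_mul] at this
      exact this
    have hQτne : algebraMap (MvPolynomial (Fin n) ℚ) (FractionRing (MvPolynomial (Fin n) ℚ))
        (rename (⇑τ) (Q w)) ≠ 0 := by
      rw [Ne, halg0]
      intro hz
      exact hQne w (rename_injective _ τ.injective (by simpa using hz))
    rw [map_mul, hVτ, map_mul, mul_div_mul_right _ _ hQτne]
  have base : DS n h =
      algebraMap (MvPolynomial (Fin n) ℚ) (FractionRing (MvPolynomial (Fin n) ℚ)) N /
        algebraMap (MvPolynomial (Fin n) ℚ) (FractionRing (MvPolynomial (Fin n) ℚ)) (Vn n) := by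
    have := frac 1
    simp only [Equiv.Perm.coe_one, rename_id] at this
    exact this.symm
  have hVne : algebraMap (MvPolynomial (Fin n) ℚ) (FractionRing (MvPolynomial (Fin n) ℚ))
      (Vn n) ≠ 0 := by
    rw [Ne, halg0]; exact Vn_ne_zero
  have hdvdN : ∀ p ∈ Pn n, (X p.2 - X p.1 : MvPolynomial (Fin n) ℚ) ∣ N := by
    intro p hp
    have hlt : p.1 < p.2 := by simpa [Pn] using hp
    have hab : p.1 ≠ p.2 := hlt.ne
    set τ := Equiv.swap p.1 p.2 with hτdef
    have hVτ : rename (⇑τ) (Vn n) = - Vn n := rename_swap_Vn hab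
    have hτVne : algebraMap (MvPolynomial (Fin n) ℚ) (FractionRing (MvPolynomial (Fin n) ℚ))
        (rename (⇑τ) (Vn n)) ≠ 0 := by
      rw [Ne, halg0, hVτ, neg_eq_zero]
      exact Vn_ne_zero
    have h1 := (frac τ).trans base
    rw [div_eq_div_iff hτVne hVne] at h1
    rw [← map_mul, ← map_mul] at h1
    have hcross : rename (⇑τ) N * Vn n = N * rename (⇑τ) (Vn n) := hinj h1
    rw [hVτ] at hcross
    have hNτ : rename (⇑τ) N = - N := by
      have h2 : rename (⇑τ) N * Vn n = (-N) * Vn n := by rw [hcross]; ring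
      exact mul_right_cancel₀ Vn_ne_zero h2
    set σf : Fin n → MvPolynomial (Fin n) ℚ := fun i => if i = p.1 then X p.2 else X i with hσf
    have hφτ : aeval (R := ℚ) σf (rename (⇑τ) N) = aeval (R := ℚ) σf N := by
      have hcomp : ((aeval (R := ℚ) σf :
            MvPolynomial (Fin n) ℚ →ₐ[ℚ] MvPolynomial (Fin n) ℚ).comp
          (rename (⇑τ) : MvPolynomial (Fin n) ℚ →ₐ[ℚ] MvPolynomial (Fin n) ℚ))
          = aeval (R := ℚ) σf := by
        apply MvPolynomial.algHom_ext
        intro i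
        simp only [AlgHom.coe_comp, Function.comp_apply, rename_X, aeval_X]
        rcases eq_or_ne i p.1 with rfl | h1
        · rw [hτdef, Equiv.swap_apply_left]
          simp [hσf, hab.symm]
        rcases eq_or_ne i p.2 with rfl | h2
        · rw [hτdef, Equiv.swap_apply_right]
          simp [hσf, h1]
        · rw [hτdef, Equiv.swap_apply_of_ne_of_ne h1 h2]
      exact DFunLike.congr_fun hcomp N
    have hφN : aeval (R := ℚ) σf N = 0 := by
      have h2 : aeval (R := ℚ) σf N = - aeval (R := ℚ) σf N := by
        conv_lhs => rw [← hφτ, hNτ, map_neg]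
      have h3 : (2 : MvPolynomial (Fin n) ℚ) * aeval (R := ℚ) σf N = 0 := by
        linear_combination h2
      rcases mul_eq_zero.mp h3 with hc | hc
      · exfalso
        have hc2 := congrArg (eval (fun _ : Fin n => (0 : ℚ))) hc
        rw [map_ofNat, map_zero] at hc2
        norm_num at hc2
      · exact hc
    have hdvd1 : (X p.1 - X p.2 : MvPolynomial (Fin n) ℚ) ∣ N := by
      have hsd := sub_dvd_aeval_self p.1 p.2 N
      rw [show aeval (R := ℚ) (fun i => if i = p.1 then X p.2 else X i) N
        = aeval (R := ℚ) σf N from rfl, hφN, sub_zero] at hsd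
      exact hsd
    have hrw : (X p.2 - X p.1 : MvPolynomial (Fin n) ℚ) = -(X p.1 - X p.2) := by ring
    rw [hrw]
    exact (neg_dvd).mpr hdvd1
  have hVdvd : Vn n ∣ N := by
    rw [Vn_eq_prod]
    exact prod_dvd_of_dvd (fun p hp => hp) hdvdN
  obtain ⟨M, hM⟩ := hVdvd
  have hD : n - 1 ≤ (Pn n).card := by
    rcases le_or_gt (n - 1) (Pn n).card with hc | hc
    · exact hc
    · exfalso
      exact hQne 1 (zero_factor (rename_denom_ne_zero 1)
        ((denom_homog (n := n)).rename_isHomogeneous)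
        (by rw [← hQ 1]; exact Vn_homog) hc)
  have hQhom : ∀ w : Equiv.Perm (Fin n), (Q w).IsHomogeneous ((Pn n).card - (n - 1)) :=
    fun w => homog_factor (rename_denom_ne_zero w)
      ((denom_homog (n := n)).rename_isHomogeneous)
      (by rw [← hQ w]; exact Vn_homog) hD
  have hNhom : N.IsHomogeneous (m + ((Pn n).card - (n - 1))) := by
    rw [hN]
    exact IsHomogeneous.sum _ _ _ fun w _ => (hh.rename_isHomogeneous).mul (hQhom w)
  have hE : m + ((Pn n).card - (n - 1)) < (Pn n).card := by omega
  have hM0 : M = 0 := zero_factor Vn_ne_zero Vn_homog (by rw [← hM]; exact hNhom) hE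
  have hN0 : N = 0 := by rw [hM, hM0, mul_zero]
  rw [base, hN0, map_zero, zero_div]

end DSAux

theorem stmt3 (n k d : ℕ) (f g h : MvPolynomial (Fin n) ℚ)
    (hf : f.IsHomogeneous k) (hfac : f = g * h)
    (hgsym : g.IsSymmetric) (hghom : g.IsHomogeneous d)
    (hd : (k : ℤ) + 1 - n < (d : ℤ)) :
    DS n f = 0 := by
  classical
  by_cases hg0 : g = 0
  · rw [hfac, hg0, zero_mul]
    exact DSAux.DS_zero
  · have hfh : (g * h).IsHomogeneous k := by rw [← hfac]; exact hf
    by_cases hdk : d ≤ k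
    · have hh : h.IsHomogeneous (k - d) := DSAux.homog_factor hg0 hghom hfh hdk
      have hmn : (k - d) + 1 < n := by omega
      have hsplit : DS n f = algebraMap (MvPolynomial (Fin n) ℚ)
          (FractionRing (MvPolynomial (Fin n) ℚ)) g * DS n h := by
        rw [hfac, DS, DS, Finset.mul_sum]
        refine Finset.sum_congr rfl fun w _ => ?_
        rw [show (rename (⇑w)) (g * h) = g * rename (⇑w) h by rw [map_mul, hgsym w],
          map_mul, mul_div_assoc]
      rw [hsplit, DSAux.key h hh hmn, mul_zero]
    · have hh0 : h = 0 := DSAux.zero_factor hg0 hghom hfh (by omega)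
      rw [hfac, hh0, mul_zero]
      exact DSAux.DS_zero
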